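/- Let a, b, c > 0 and set d = a + b. Then for every f ∈ ℝ, 2·∫₀^∞ ∫₀^∞ c·e^{−a|τ−τ'|}·b·e^{−b(τ+τ')}·cos(2π(τ−τ')f) dτ dτ' = 2·c·d/(d² + (2πf)²). In particular, the spectral fading variance σ̂(f) = 2∫∫ R(τ,τ')cos(2π(τ−τ')f) dτ dτ' of the exponentially attenuated Ornstein–Uhlenbeck channel model equals 2cd/(d² + (2πf)²). -/

import Mathlib

open MeasureTheory Real Set

namespace OUSpectralAux

open Filter intervalIntegral

lemma cexp_integrableOn_Ioi (z : ℂ) (hz : z.re < 0) (t : ℝ) :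
    IntegrableOn (fun x : ℝ => Complex.exp (z * x)) (Ioi t) := by
  have hb : (0:ℝ) < -z.re := by linarith
  refine (exp_neg_integrableOn_Ioi t hb).mono'
    (Continuous.aestronglyMeasurable (by fun_prop)) ?_
  filter_upwards with x
  apply le_of_eq
  simp only [Complex.norm_exp]
  congr 1
  simp [Complex.mul_re]

lemma cexp_hasDerivAt (z : ℂ) (hz0 : z ≠ 0) (x : ℝ) :
    HasDerivAt (fun y : ℝ => Complex.exp (z * y) / z) (Complex.exp (z * x)) x := by
  rw [← mul_div_cancel_right₀ (Complex.exp (z * x)) hz0]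
  apply ((Complex.hasDerivAt_exp _).comp x _).div_const z
  have h := ((hasDerivAt_id (x : ℂ)).const_mul z).comp_ofReal
  simp only [mul_one, id] at h
  exact h

lemma cexp_integral_Ioi (z : ℂ) (hz : z.re < 0) (t : ℝ) :
    ∫ x in Ioi t, Complex.exp (z * x) = -Complex.exp (z * t) / z := by
  have hz0 : z ≠ 0 := fun h => by simp [h] at hz
  have := integral_Ioi_of_hasDerivAt_of_tendsto'
    (f := fun y : ℝ => Complex.exp (z * y) / z) (a := t) (m := 0)
    (fun x _ => cexp_hasDerivAt z hz0 x) (cexp_integrableOn_Ioi z hz t) ?_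
  · rw [this]; ring
  · rw [tendsto_zero_iff_norm_tendsto_zero]
    have : (fun x : ℝ => ‖Complex.exp (z * x) / z‖) =
        fun x : ℝ => Real.exp (z.re * x) / ‖z‖ := by
      funext x
      simp [Complex.norm_exp, Complex.mul_re]
    rw [this]
    have : Tendsto (fun x : ℝ => Real.exp (z.re * x)) atTop (nhds 0) := by
      apply Real.tendsto_exp_atBot.comp
      exact Tendsto.const_mul_atTop_of_neg hz tendsto_id
    simpa using this.div_const ‖z‖

lemma rexp_integral_Ioi (k t : ℝ) (hk : 0 < k) :
    ∫ x in Ioi t, Real.exp (-(k * x)) = Real.exp (-(k * t)) / k := by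
  have := integral_Ioi_of_hasDerivAt_of_tendsto'
    (f := fun y : ℝ => -Real.exp (-(k * y)) / k) (a := t) (m := 0)
    (f' := fun y : ℝ => Real.exp (-(k * y))) (fun x _ => ?_) ?_ ?_
  · rw [this]; ring
  · have h1 : HasDerivAt (fun y : ℝ => -(k * y)) (-k) x := by
      simpa using ((hasDerivAt_id x).const_mul (-k)).congr_deriv (by ring)
    have := ((Real.hasDerivAt_exp _).comp x h1).neg.div_const k
    exact this.congr_deriv (by field_simp)
  · simpa [neg_mul] using exp_neg_integrableOn_Ioi t hk
  · rw [show (0:ℝ) = -0/k by simp]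
    apply Tendsto.div_const
    apply Tendsto.neg
    apply Real.tendsto_exp_atBot.comp
    simpa [neg_mul] using Tendsto.const_mul_atTop_of_neg (show -k < 0 by linarith) tendsto_id

lemma mul_rexp_integrableOn_Ioi (k : ℝ) (hk : 0 < k) :
    IntegrableOn (fun x : ℝ => x * Real.exp (-(k * x))) (Ioi 0) := by
  refine ((exp_neg_integrableOn_Ioi 0 (half_pos hk)).const_mul (2/k)).mono'
    (Continuous.aestronglyMeasurable (by fun_prop)) ?_
  filter_upwards [ae_restrict_mem measurableSet_Ioi] with x hx
  simp only [mem_Ioi] at hx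
  rw [Real.norm_eq_abs, abs_of_nonneg (by positivity)]
  have h1 : k/2 * x ≤ Real.exp (k/2 * x) := by
    linarith [Real.add_one_le_exp (k/2*x)]
  have h2 : Real.exp (-(k*x)) = Real.exp (-(k/2*x)) * Real.exp (-(k/2*x)) := by
    rw [← Real.exp_add]; ring_nf
  have h3 : x * Real.exp (-(k/2*x)) ≤ 2/k := by
    rw [Real.exp_neg, ← div_eq_mul_inv, div_le_div_iff₀ (Real.exp_pos _) hk]
    nlinarith
  calc x * Real.exp (-(k*x)) = (x * Real.exp (-(k/2*x))) * Real.exp (-(k/2*x)) := by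
        rw [h2]; ring
    _ ≤ 2/k * Real.exp (-(k/2*x)) := by
        apply mul_le_mul_of_nonneg_right h3 (Real.exp_nonneg _)
    _ = 2/k * Real.exp (-(k/2)*x) := by ring_nf

lemma mul_rexp_integral_Ioi (k : ℝ) (hk : 0 < k) :
    ∫ x in Ioi (0:ℝ), x * Real.exp (-(k * x)) = 1 / k^2 := by
  have := integral_Ioi_of_hasDerivAt_of_tendsto'
    (f := fun y : ℝ => -((y/k + 1/k^2) * Real.exp (-(k * y)))) (a := 0) (m := 0)
    (f' := fun y : ℝ => y * Real.exp (-(k * y))) (fun x _ => ?_)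
    (mul_rexp_integrableOn_Ioi k hk) ?_
  · rw [this]; norm_num
  · have h1 : HasDerivAt (fun y : ℝ => -(k * y)) (-k) x := by
      simpa using ((hasDerivAt_id x).const_mul (-k)).congr_deriv (by ring)
    have he := (Real.hasDerivAt_exp _).comp x h1
    have hp : HasDerivAt (fun y : ℝ => y/k + 1/k^2) (1/k) x := by
      have h2 := ((hasDerivAt_id x).div_const k).add_const (1/k^2 : ℝ)
      simpa [one_div] using h2
    have := (hp.mul he).neg
    exact this.congr_deriv (by simp only [Function.comp]; field_simp; ring)
  · have T1 : Tendsto (fun y : ℝ => (k*y) * Real.exp (-(k*y))) atTop (nhds 0) := by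
      have h := Real.tendsto_pow_mul_exp_neg_atTop_nhds_zero 1
      simp only [pow_one] at h
      exact h.comp (Tendsto.const_mul_atTop hk tendsto_id)
    have T2 : Tendsto (fun y : ℝ => Real.exp (-(k*y))) atTop (nhds 0) :=
      Real.tendsto_exp_atBot.comp (by
        simpa [neg_mul] using Tendsto.const_mul_atTop_of_neg (show -k<0 by linarith) tendsto_id)
    have T := ((T1.const_mul (1/k^2)).add (T2.const_mul (1/k^2))).neg
    simp only [mul_zero, add_zero, neg_zero] at T
    refine T.congr fun y => ?_
    field_simp

lemma cintegral_re {f : ℝ → ℂ} {μ : Measure ℝ} (hf : Integrable f μ) :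
    ∫ x, (f x).re ∂μ = (∫ x, f x ∂μ).re := by
  simpa using integral_re hf

lemma ou_point (a b c ω : ℝ) (τ τ' : ℝ) :
    c * Real.exp (-a * |τ - τ'|) * b * Real.exp (-b * (τ + τ')) * Real.cos (ω * (τ - τ')) =
    (((c*b : ℝ) : ℂ) * Complex.exp ((-(a:ℂ) + (ω:ℂ)*Complex.I) * |τ - τ'| - (b:ℂ)*(τ+τ'))).re := by
  have harg : Real.cos (ω * |τ - τ'|) = Real.cos (ω * (τ - τ')) := by
    rcases abs_choice (τ - τ') with h|h
    · rw [h]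
    · rw [h, mul_neg, Real.cos_neg]
  have hz : ((-(a:ℂ) + (ω:ℂ)*Complex.I) * |τ - τ'| - (b:ℂ)*(τ+τ')) =
      Complex.mk (-a * |τ - τ'| - b*(τ+τ')) (ω * |τ - τ'|) := by
    apply Complex.ext <;> simp [Complex.mul_re, Complex.mul_im]
  rw [hz, Complex.mul_re]
  simp [Complex.exp_re, Complex.exp_im, harg, Real.exp_sub, Real.exp_add]
  rw [Real.exp_neg (b*(τ+τ')), div_eq_mul_inv]
  ring

lemma ou_gc_integrable (a b c : ℝ) (ha : 0 < a) (hb : 0 < b) (hc : 0 ≤ c) (ω : ℝ)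
    (τ' t : ℝ) (ht : 0 ≤ τ') :
    IntegrableOn (fun τ : ℝ => ((c*b : ℝ) : ℂ) *
      Complex.exp ((-(a:ℂ) + (ω:ℂ)*Complex.I) * |τ - τ'| - (b:ℂ)*(τ+τ'))) (Ioi t) := by
  refine ((exp_neg_integrableOn_Ioi t hb).const_mul (c*b)).mono'
    (Continuous.aestronglyMeasurable (by fun_prop)) ?_
  filter_upwards with x
  simp only [norm_mul, Complex.norm_exp, Complex.norm_real, Real.norm_eq_abs]
  rw [abs_of_nonneg hc, abs_of_nonneg hb.le]
  apply mul_le_mul_of_nonneg_left _ (by positivity)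
  rw [Real.exp_le_exp]
  simp only [Complex.sub_re, Complex.add_re, Complex.mul_re, Complex.neg_re, Complex.ofReal_re,
    Complex.ofReal_im, Complex.I_re, Complex.I_im, Complex.neg_im, Complex.mul_im, Complex.add_im]
  nlinarith [abs_nonneg (x - τ'), mul_nonneg ha.le (abs_nonneg (x - τ')), mul_nonneg hb.le ht]

lemma ou_inner_split (b cb : ℝ) (w : ℂ) (hb : 0 < b) (hw : w.re < 0)
    (τ' : ℝ) (hτ' : 0 ≤ τ')
    (hInt : IntegrableOn (fun τ : ℝ =>
      (cb:ℂ) * Complex.exp (w * |τ - τ'| - (b:ℂ)*(τ+τ'))) (Ioi τ')) :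
    ∫ τ in Ioi (0:ℝ), (cb:ℂ) * Complex.exp (w * |τ - τ'| - (b:ℂ)*(τ+τ')) =
      (∫ τ in (0:ℝ)..τ', ((cb:ℂ) * Complex.exp ((w-b)*τ')) * Complex.exp (-(w+b)*τ)) +
      ((cb:ℂ) * Complex.exp (-(w+b)*τ')) * (-Complex.exp ((w-b)*τ')/(w-b)) := by
  have hcont : Continuous (fun τ : ℝ =>
      (cb:ℂ) * Complex.exp (w * |τ - τ'| - (b:ℂ)*(τ+τ'))) := by fun_prop
  rw [← Ioc_union_Ioi_eq_Ioi hτ', setIntegral_union (Ioc_disjoint_Ioi le_rfl)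
    measurableSet_Ioi (hcont.integrableOn_Ioc) hInt]
  congr 1
  · rw [intervalIntegral.integral_of_le hτ']
    apply setIntegral_congr_fun measurableSet_Ioc
    intro τ hτ
    simp only
    rw [abs_of_nonpos (by simp only [mem_Ioc] at hτ; linarith), mul_assoc, ← Complex.exp_add]
    congr 2
    push_cast
    ring
  · have e2 : EqOn (fun τ : ℝ => (cb:ℂ) * Complex.exp (w * |τ - τ'| - (b:ℂ)*(τ+τ')))
        (fun τ : ℝ => ((cb:ℂ) * Complex.exp (-(w+b)*τ')) * Complex.exp ((w-b)*τ)) (Ioi τ') := by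
      intro τ hτ
      simp only
      rw [abs_of_nonneg (by simp only [mem_Ioi] at hτ; linarith), mul_assoc, ← Complex.exp_add]
      congr 2
      push_cast
      ring
    rw [setIntegral_congr_fun measurableSet_Ioi e2, MeasureTheory.integral_const_mul,
      cexp_integral_Ioi _ (by simp [Complex.sub_re]; linarith) τ']

lemma ou_inner_nondeg (b cb : ℝ) (w : ℂ) (hb : 0 < b) (hw : w.re < 0) (hwb : w + b ≠ 0)
    (τ' : ℝ) (hτ' : 0 ≤ τ')
    (hInt : IntegrableOn (fun τ : ℝ =>
      (cb:ℂ) * Complex.exp (w * |τ - τ'| - (b:ℂ)*(τ+τ'))) (Ioi τ')) :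
    ∫ τ in Ioi (0:ℝ), (cb:ℂ) * Complex.exp (w * |τ - τ'| - (b:ℂ)*(τ+τ')) =
      ((cb:ℂ)/(w+b)) * Complex.exp ((w-b)*τ') +
      ((cb:ℂ)/(b-w) - (cb:ℂ)/(w+b)) * Complex.exp ((-(2*b):ℂ)*τ') := by
  have hbw : (b:ℂ) - w ≠ 0 := by
    intro h
    have := congrArg Complex.re h
    simp [Complex.sub_re] at this
    linarith
  have hwb' : w - (b:ℂ) ≠ 0 := by
    intro h
    have := congrArg Complex.re h
    simp [Complex.sub_re] at this
    linarith
  rw [ou_inner_split b cb w hb hw τ' hτ' hInt, _root_.intervalIntegral.integral_const_mul,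
    integral_exp_mul_complex (neg_ne_zero.2 hwb)]
  have hE : Complex.exp ((w-b)*τ') * Complex.exp (-(w+b)*τ') =
      Complex.exp ((-(2*b):ℂ)*τ') := by
    rw [← Complex.exp_add]; congr 1; push_cast; ring
  rw [← hE]
  simp only [Complex.ofReal_zero, mul_zero, Complex.exp_zero]
  set E1 := Complex.exp ((w-(b:ℂ))*τ') with hE1
  set E2 := Complex.exp (-(w+(b:ℂ))*τ') with hE2
  have h3 : -w - (b:ℂ) ≠ 0 := by intro h; apply hwb; linear_combination -h
  have h4 : -(w+(b:ℂ)) ≠ 0 := neg_ne_zero.2 hwb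
  rw [show (b:ℂ)-w = -(w-(b:ℂ)) by ring, div_neg, div_neg]
  field_simp
  ring

lemma ou_inner_deg (b cb : ℝ) (w : ℂ) (hb : 0 < b) (hw : w.re < 0) (hwb : w + b = 0)
    (τ' : ℝ) (hτ' : 0 ≤ τ')
    (hInt : IntegrableOn (fun τ : ℝ =>
      (cb:ℂ) * Complex.exp (w * |τ - τ'| - (b:ℂ)*(τ+τ'))) (Ioi τ')) :
    ∫ τ in Ioi (0:ℝ), (cb:ℂ) * Complex.exp (w * |τ - τ'| - (b:ℂ)*(τ+τ')) =
      ((cb * τ' + cb/(2*b) : ℝ):ℂ) * Complex.exp ((w-b)*τ') := by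
  have hwb2 : w = -(b:ℂ) := by linear_combination hwb
  rw [ou_inner_split b cb w hb hw τ' hτ' hInt]
  rw [show -(w+(b:ℂ)) = 0 by rw [hwb]; ring]
  simp only [zero_mul, Complex.exp_zero, mul_one, one_mul]
  rw [_root_.intervalIntegral.integral_const]
  have hwb3 : w - (b:ℂ) = -(2*b) := by rw [hwb2]; ring
  rw [hwb3]
  have h2b : ((-(2*b):ℂ)) ≠ 0 := by
    simp only [ne_eq, neg_eq_zero]
    exact_mod_cast (by positivity : (2*b:ℝ) ≠ 0)
  push_cast
  field_simp
  simp only [Complex.real_smul]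
  ring

lemma ou_outer_val (b c : ℝ) (w : ℂ) (hb : ((2*b:ℝ):ℂ) ≠ 0) (hwb : w + b ≠ 0)
    (hbw : (b:ℂ) - w ≠ 0) (hwb' : w - (b:ℂ) ≠ 0) :
    ((c*b:ℝ):ℂ)/(w+b) * (-1/(w-(b:ℂ))) +
      (((c*b:ℝ):ℂ)/((b:ℂ)-w) - ((c*b:ℝ):ℂ)/(w+b)) * (-1/(-(2*(b:ℂ)))) = (c:ℂ)/((b:ℂ)-w) := by
  have h2b : (2*(b:ℂ)) ≠ 0 := by push_cast at hb; exact hb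
  have hb0 : (b:ℂ) ≠ 0 := right_ne_zero_of_mul h2b
  rw [show (b:ℂ)-w = -(w-(b:ℂ)) by ring, div_neg, div_neg]
  push_cast
  field_simp
  ring

lemma ou_re_val (a b c ω : ℝ) (hD : ((a+b)^2 + ω^2) ≠ 0) :
    ((c:ℂ)/((b:ℂ) - (-(a:ℂ) + (ω:ℂ)*Complex.I))).re = c*(a+b)/((a+b)^2+ω^2) := by
  have h1 : ((b:ℂ) - (-(a:ℂ)+(ω:ℂ)*Complex.I)) = Complex.mk (b+a) (-ω) := by
    apply Complex.ext <;> simp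
  have hN : ((b+a)*(b+a) + -ω*(-ω) : ℝ) ≠ 0 := by
    intro h; apply hD; linarith [h]
  rw [h1, Complex.div_re]
  simp only [Complex.normSq_mk, Complex.ofReal_re, Complex.ofReal_im]
  rw [zero_mul, zero_div, add_zero, div_eq_div_iff hN hD]
  ring

end OUSpectralAux

open OUSpectralAux

/-- The spectral fading variance of the exponentially attenuated Ornstein–Uhlenbeck
channel model: with `R(τ,τ') = c e^{-a|τ-τ'|} b e^{-b(τ+τ')}` on `τ,τ' ≥ 0` and `d = a+b`,
`σ̂(f) = 2∬ R(τ,τ') cos(2π(τ-τ')f) dτ dτ' = 2cd/(d² + (2πf)²)`. -/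
theorem ou_spectral_fading_variance (a b c : ℝ) (ha : 0 < a) (hb : 0 < b) (hc : 0 < c)
    (f : ℝ) :
    2 * ∫ τ' in Ioi (0 : ℝ), ∫ τ in Ioi (0 : ℝ),
        c * Real.exp (-a * |τ - τ'|) * b * Real.exp (-b * (τ + τ')) *
          Real.cos (2 * π * (τ - τ') * f) =
      2 * c * (a + b) / ((a + b) ^ 2 + (2 * π * f) ^ 2) := by
  set ω : ℝ := 2 * π * f with hω
  set w : ℂ := -(a:ℂ) + (ω:ℂ) * Complex.I with hw
  have hwre : w.re = -a := by simp [hw]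
  have hwim : w.im = ω := by simp [hw]
  have hwre' : w.re < 0 := by rw [hwre]; linarith
  have point : ∀ τ' τ : ℝ,
      c * Real.exp (-a * |τ - τ'|) * b * Real.exp (-b * (τ + τ')) *
        Real.cos (2 * π * (τ - τ') * f) =
      (((c*b:ℝ):ℂ) * Complex.exp (w * |τ - τ'| - (b:ℂ)*(τ+τ'))).re := by
    intro τ' τ
    rw [show 2*π*(τ-τ')*f = ω*(τ-τ') by rw [hω]; ring, hw]
    exact ou_point a b c ω τ τ'
  have gcInt : ∀ τ' t : ℝ, 0 ≤ τ' → IntegrableOn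
      (fun τ : ℝ => ((c*b:ℝ):ℂ) * Complex.exp (w * |τ - τ'| - (b:ℂ)*(τ+τ'))) (Ioi t) := by
    intro τ' t ht
    rw [hw]
    exact ou_gc_integrable a b c ha hb hc.le ω τ' t ht
  have hD : ((a+b)^2 + ω^2) ≠ 0 := by positivity
  have key : (∫ τ' in Ioi (0:ℝ), ∫ τ in Ioi (0:ℝ),
      c * Real.exp (-a * |τ - τ'|) * b * Real.exp (-b * (τ + τ')) *
        Real.cos (2 * π * (τ - τ') * f)) = c * (a+b) / ((a+b)^2 + ω^2) := by
    rcases eq_or_ne (w + (b:ℂ)) 0 with hdeg | hndeg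
    · -- degenerate case : a = b, ω = 0
      have hab : b = a := by
        have := congrArg Complex.re hdeg
        simp [Complex.add_re, hwre] at this
        linarith
      have hω0 : ω = 0 := by
        have := congrArg Complex.im hdeg
        simpa [Complex.add_im, hwim] using this
      have inner_eq : EqOn
          (fun τ' : ℝ => ∫ τ in Ioi (0:ℝ),
            c * Real.exp (-a * |τ - τ'|) * b * Real.exp (-b * (τ + τ')) *
              Real.cos (2 * π * (τ - τ') * f))
          (fun τ' : ℝ => c*b*(τ' * Real.exp (-(2*b*τ'))) + c/2 * Real.exp (-(2*b*τ')))
          (Ioi 0) := by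
        intro τ' hτ'
        have hτ'0 : 0 ≤ τ' := le_of_lt hτ'
        simp only
        rw [setIntegral_congr_fun measurableSet_Ioi (fun τ _ => point τ' τ),
          cintegral_re (gcInt τ' 0 hτ'0),
          ou_inner_deg b (c*b) w hb hwre' hdeg τ' hτ'0 (gcInt τ' τ' hτ'0)]
        have hwb3 : (w - (b:ℂ))*(τ':ℂ) = ((-(2*b*τ') : ℝ) : ℂ) := by
          rw [show w = -(b:ℂ) by linear_combination hdeg]
          push_cast
          ring
        rw [hwb3, ← Complex.ofReal_exp, ← Complex.ofReal_mul, Complex.ofReal_re]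
        field_simp
      rw [setIntegral_congr_fun measurableSet_Ioi inner_eq]
      have i2 : IntegrableOn (fun x : ℝ => Real.exp (-(2*b*x))) (Ioi 0) := by
        simpa [neg_mul] using exp_neg_integrableOn_Ioi (0:ℝ) (show (0:ℝ) < 2*b by positivity)
      have i1 := mul_rexp_integrableOn_Ioi (2*b) (by positivity)
      rw [integral_add (i1.const_mul (c*b)) (i2.const_mul (c/2)), MeasureTheory.integral_const_mul,
        MeasureTheory.integral_const_mul, mul_rexp_integral_Ioi (2*b) (by positivity)]
      have : ∫ x in Ioi (0:ℝ), Real.exp (-(2*b*x)) = 1/(2*b) := by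
        simpa using rexp_integral_Ioi (2*b) 0 (by positivity)
      rw [this, ← hab, hω0]
      field_simp
      ring
    · -- nondegenerate case
      have hbw : (b:ℂ) - w ≠ 0 := by
        intro h
        have := congrArg Complex.re h
        simp [Complex.sub_re, hwre] at this
        linarith
      have hwb' : w - (b:ℂ) ≠ 0 := by
        intro h
        have := congrArg Complex.re h
        simp [Complex.sub_re, hwre] at this
        linarith
      have z1re : (w - (b:ℂ)).re < 0 := by
        simp [Complex.sub_re, hwre]
        linarith
      have z2re : ((-(2*b):ℂ)).re < 0 := by
        simp
        positivity
      set K1 : ℂ := ((c*b:ℝ):ℂ)/(w+b) with hK1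
      set K2 : ℂ := ((c*b:ℝ):ℂ)/((b:ℂ)-w) - ((c*b:ℝ):ℂ)/(w+b) with hK2
      have inner_eq : EqOn
          (fun τ' : ℝ => ∫ τ in Ioi (0:ℝ),
            c * Real.exp (-a * |τ - τ'|) * b * Real.exp (-b * (τ + τ')) *
              Real.cos (2 * π * (τ - τ') * f))
          (fun τ' : ℝ => (K1 * Complex.exp ((w-(b:ℂ))*τ') +
            K2 * Complex.exp ((-(2*b):ℂ)*τ')).re) (Ioi 0) := by
        intro τ' hτ'
        have hτ'0 : 0 ≤ τ' := le_of_lt hτ'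
        simp only
        rw [setIntegral_congr_fun measurableSet_Ioi (fun τ _ => point τ' τ),
          cintegral_re (gcInt τ' 0 hτ'0),
          ou_inner_nondeg b (c*b) w hb hwre' hndeg τ' hτ'0 (gcInt τ' τ' hτ'0)]
      rw [setIntegral_congr_fun measurableSet_Ioi inner_eq]
      have j1 := (cexp_integrableOn_Ioi _ z1re 0).const_mul K1
      have j2 := (cexp_integrableOn_Ioi _ z2re 0).const_mul K2
      have jsum : IntegrableOn (fun τ' : ℝ => K1 * Complex.exp ((w-(b:ℂ))*τ') +
          K2 * Complex.exp ((-(2*b):ℂ)*τ')) (Ioi 0) := j1.add j2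
      rw [cintegral_re jsum, integral_add j1 j2, MeasureTheory.integral_const_mul, MeasureTheory.integral_const_mul,
        cexp_integral_Ioi _ z1re 0, cexp_integral_Ioi _ z2re 0]
      have h2b : ((-(2*b):ℂ)) ≠ 0 := by
        simp only [ne_eq, neg_eq_zero]
        exact_mod_cast (by positivity : (2*b:ℝ) ≠ 0)
      have hval : K1 * (-Complex.exp ((w-(b:ℂ))*((0:ℝ):ℂ))/(w-(b:ℂ))) +
          K2 * (-Complex.exp ((-(2*b):ℂ)*((0:ℝ):ℂ))/(-(2*b):ℂ)) = (c:ℂ)/((b:ℂ)-w) := by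
        rw [hK1, hK2]
        simp only [Complex.ofReal_zero, mul_zero, Complex.exp_zero]
        have := ou_outer_val b c w (by exact_mod_cast (by positivity : (2*b:ℝ) ≠ 0)) hndeg hbw hwb'
        convert this using 3 <;> push_cast <;> ring
      rw [hval, hw]
      exact ou_re_val a b c ω hD
  rw [key]
  ring
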